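/- (Boyer–Finley equation.) Let p, φ : ℝ³ → ℝ be smooth functions of (y¹,y³,y⁴) and set q = −e^{φ}. If the system p_{y⁴} + q_{y¹} = 0 and q_{y³} = p_{y¹} q holds at every point of ℝ³, then φ satisfies the Boyer–Finley equation φ_{y³y⁴} = (e^{φ})_{y¹y¹} at every point of ℝ³. -/

import Mathlib

noncomputable section

/-- Partial derivative of `f : ℝⁿ → ℝ` in the `i`-th coordinate direction. -/
def pd {n : ℕ} (i : Fin n) (f : (Fin n → ℝ) → ℝ) : (Fin n → ℝ) → ℝ :=
  fun p => fderiv ℝ f p (Pi.single i 1)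

/-- Symmetry of second partial derivatives for smooth functions. -/
lemma pd_comm {n : ℕ} (i j : Fin n) (f : (Fin n → ℝ) → ℝ)
    (hf : ContDiff ℝ (⊤ : ℕ∞) f) (v : Fin n → ℝ) :
    pd i (pd j f) v = pd j (pd i f) v := by
  have hdf : Differentiable ℝ (fderiv ℝ f) :=
    (hf.fderiv_right (m := ((⊤ : ℕ∞) : WithTop ℕ∞)) (by exact_mod_cast le_top)).differentiable (by simp)
  have key : ∀ (k : Fin n) (u : Fin n → ℝ) (x : Fin n → ℝ),
      pd k (fun y => fderiv ℝ f y u) x = fderiv ℝ (fderiv ℝ f) x (Pi.single k 1) u := by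
    intro k u x
    have := fderiv_clm_apply (c := fderiv ℝ f) (u := fun _ => u) (hdf x)
      (differentiableAt_const u)
    simp only [fderiv_fun_const, Pi.zero_apply, ContinuousLinearMap.comp_zero, add_zero] at this
    simp only [pd, this, zero_add, ContinuousLinearMap.add_apply,
      ContinuousLinearMap.flip_apply, ContinuousLinearMap.zero_apply]
  have hsym : IsSymmSndFDerivAt ℝ f v :=
    hf.contDiffAt.isSymmSndFDerivAt (by rw [minSmoothness_of_isRCLikeNormedField, show ((2:WithTop ℕ∞)) = ((2:ℕ∞) : WithTop ℕ∞) by rfl]; exact_mod_cast (le_top : (2:ℕ∞) ≤ ⊤))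
  calc pd i (pd j f) v = fderiv ℝ (fderiv ℝ f) v (Pi.single i 1) (Pi.single j 1) :=
        key i (Pi.single j 1) v
    _ = fderiv ℝ (fderiv ℝ f) v (Pi.single j 1) (Pi.single i 1) := hsym _ _
    _ = pd j (pd i f) v := (key j (Pi.single i 1) v).symm

lemma pd_neg_exp {n : ℕ} (i : Fin n) (φ : (Fin n → ℝ) → ℝ)
    (hφ : ContDiff ℝ (⊤ : ℕ∞) φ) (v : Fin n → ℝ) :
    pd i (fun w => -Real.exp (φ w)) v = -(Real.exp (φ v) * pd i φ v) := by
  have hd : DifferentiableAt ℝ φ v := hφ.differentiable (by simp) v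
  have hde : DifferentiableAt ℝ (fun w => Real.exp (φ w)) v := hd.exp
  simp [pd, fderiv_fun_neg, fderiv_exp hd]

/-- Boyer–Finley equation: if `q = −e^{φ}` and the system
`p_{y⁴} + q_{y¹} = 0`, `q_{y³} = p_{y¹} q` holds at every point of `ℝ³` (variables ordered
`(y¹,y³,y⁴)`), then `φ_{y³y⁴} = (e^{φ})_{y¹y¹}` at every point of `ℝ³`. -/
theorem stmt16 (p φ : (Fin 3 → ℝ) → ℝ) (hp : ContDiff ℝ (⊤ : ℕ∞) p)
    (hφ : ContDiff ℝ (⊤ : ℕ∞) φ)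
    (hsys : ∀ v : Fin 3 → ℝ,
      pd 2 p v + pd 0 (fun w => -Real.exp (φ w)) v = 0 ∧
      pd 1 (fun w => -Real.exp (φ w)) v = pd 0 p v * (-Real.exp (φ v))) :
    ∀ v : Fin 3 → ℝ, pd 1 (pd 2 φ) v = pd 0 (pd 0 (fun w => Real.exp (φ w))) v := by
  have hexp : ContDiff ℝ (⊤ : ℕ∞) (fun w => Real.exp (φ w)) :=
    Real.contDiff_exp.comp hφ
  have key1 : pd 1 φ = pd 0 p := by
    funext v
    have h := (hsys v).2
    rw [pd_neg_exp 1 φ hφ v] at h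
    have hne : Real.exp (φ v) ≠ 0 := (Real.exp_pos _).ne'
    have h2 : pd 1 φ v * Real.exp (φ v) = pd 0 p v * Real.exp (φ v) := by ring_nf; ring_nf at h; linarith
    exact mul_right_cancel₀ hne h2
  have key2 : pd 2 p = pd 0 (fun w => Real.exp (φ w)) := by
    funext v
    have h := (hsys v).1
    rw [pd_neg_exp 0 φ hφ v] at h
    have : pd 0 (fun w => Real.exp (φ w)) v = Real.exp (φ v) * pd 0 φ v := by
      have hd : DifferentiableAt ℝ φ v := hφ.differentiable (by simp) v
      simp [pd, fderiv_exp hd]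
    rw [this]; linarith
  intro v
  calc pd 1 (pd 2 φ) v = pd 2 (pd 1 φ) v := pd_comm 1 2 φ hφ v
    _ = pd 2 (pd 0 p) v := by rw [key1]
    _ = pd 0 (pd 2 p) v := pd_comm 2 0 p hp v
    _ = pd 0 (pd 0 (fun w => Real.exp (φ w))) v := by rw [key2]
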